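/- arXiv:2307.00508 — 5 statements merged into one kernel-verified Lean document; each statement's English description precedes it below -/
import Mathlib

section
/- Let A : H → H and D : K → K be invertible operators, B : K → H, C : H → K. Then the restriction of D⁻¹ C to ker(A - B D⁻¹ C) is a linear isomorphism onto ker(D - C A⁻¹ B), with inverse given by the restriction of A⁻¹ B. -/
/-- The restriction of `D⁻¹ C` to `ker (A - B D⁻¹ C)` is a linear isomorphism onto
`ker (D - C A⁻¹ B)`, with inverse the restriction of `A⁻¹ B`. -/
theorem stmt_1
    {H K : Type*} [NormedAddCommGroup H] [InnerProductSpace ℂ H] [CompleteSpace H]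
    [NormedAddCommGroup K] [InnerProductSpace ℂ K] [CompleteSpace K]
    (A A' : H →L[ℂ] H) (D D' : K →L[ℂ] K)
    (hA : A ∘L A' = ContinuousLinearMap.id ℂ H)
    (hA' : A' ∘L A = ContinuousLinearMap.id ℂ H)
    (hD : D ∘L D' = ContinuousLinearMap.id ℂ K)
    (hD' : D' ∘L D = ContinuousLinearMap.id ℂ K)
    (B : K →L[ℂ] H) (C : H →L[ℂ] K) :
    -- `D⁻¹ C` maps `ker (A - B D⁻¹ C)` into `ker (D - C A⁻¹ B)`
    (∀ v : H, (A - B ∘L D' ∘L C) v = 0 → (D - C ∘L A' ∘L B) (D' (C v)) = 0) ∧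
    -- `A⁻¹ B` maps `ker (D - C A⁻¹ B)` into `ker (A - B D⁻¹ C)`
    (∀ w : K, (D - C ∘L A' ∘L B) w = 0 → (A - B ∘L D' ∘L C) (A' (B w)) = 0) ∧
    -- the two restrictions are mutually inverse
    (∀ v : H, (A - B ∘L D' ∘L C) v = 0 → A' (B (D' (C v))) = v) ∧
    (∀ w : K, (D - C ∘L A' ∘L B) w = 0 → D' (C (A' (B w))) = w) := by
  have hA'A : ∀ x, A' (A x) = x := fun x => by
    simpa using DFunLike.congr_fun hA' x
  have hAA' : ∀ x, A (A' x) = x := fun x => by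
    simpa using DFunLike.congr_fun hA x
  have hD'D : ∀ x, D' (D x) = x := fun x => by
    simpa using DFunLike.congr_fun hD' x
  have hDD' : ∀ x, D (D' x) = x := fun x => by
    simpa using DFunLike.congr_fun hD x
  refine ⟨?_, ?_, ?_, ?_⟩
  · intro v hv
    simp only [ContinuousLinearMap.sub_apply, ContinuousLinearMap.comp_apply,
      sub_eq_zero] at hv ⊢
    rw [← hv, hA'A, hDD']
  · intro w hw
    simp only [ContinuousLinearMap.sub_apply, ContinuousLinearMap.comp_apply,
      sub_eq_zero] at hw ⊢
    rw [← hw, hD'D, hAA']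
  · intro v hv
    simp only [ContinuousLinearMap.sub_apply, ContinuousLinearMap.comp_apply,
      sub_eq_zero] at hv
    rw [← hv, hA'A]
  · intro w hw
    simp only [ContinuousLinearMap.sub_apply, ContinuousLinearMap.comp_apply,
      sub_eq_zero] at hw
    rw [← hw, hD'D]
end

section
/- Let B be a unital C*-algebra, A ⊆ B a unital operator algebra with C*(A) = B, π : B → B(H) a *-representation, a ∈ A a contraction, and G ⊆ H a finite-dimensional subspace such that the compression P_G π(a)|_G has norm 1. Then there exists a unit vector ξ ∈ G with π(a* a) ξ = ξ. -/
open ContinuousLinearMap in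
/-- If `π` is a representation of a unital C*-algebra `B`, `a ∈ B` is a contraction and
`G` is a finite-dimensional subspace of `H` on which the compression of `π a` has norm `1`,
then there is a unit vector `ξ ∈ G` with `π (a* a) ξ = ξ`. -/
theorem stmt_3
    {B : Type*} [NormedRing B] [StarRing B] [CStarRing B] [NormedAlgebra ℂ B]
    [CompleteSpace B] [StarModule ℂ B]
    {H : Type*} [NormedAddCommGroup H] [InnerProductSpace ℂ H] [CompleteSpace H]
    (π : B →⋆ₐ[ℂ] (H →L[ℂ] H))
    (a : B) (ha : ‖a‖ ≤ 1)
    (G : Submodule ℂ H) [FiniteDimensional ℂ G]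
    (hG : ‖(G.orthogonalProjection) ∘L (π a) ∘L G.subtypeL‖ = 1) :
    ∃ ξ : G, ‖(ξ : H)‖ = 1 ∧ π (star a * a) (ξ : H) = (ξ : H) := by
  letI : CStarAlgebra B :=
    { ‹NormedRing B›, ‹StarRing B›, ‹CStarRing B›, ‹NormedAlgebra ℂ B›, ‹StarModule ℂ B› with
      complete := ‹CompleteSpace B›.1 }
  set T : G →L[ℂ] G := (G.orthogonalProjection) ∘L (π a) ∘L G.subtypeL with hTdef
  -- the unit sphere of `G` is a nonempty compact set
  have hTne : T ≠ 0 := by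
    intro h
    rw [h] at hG
    exact zero_ne_one ((norm_zero (E := ↥G →L[ℂ] ↥G)).symm.trans hG)
  obtain ⟨x, hx⟩ : ∃ x : G, x ≠ 0 := by
    by_contra h; push_neg at h
    exact hTne (ContinuousLinearMap.ext fun y => by rw [h y]; simp)
  have hxn : ‖x‖ ≠ 0 := norm_ne_zero_iff.mpr hx
  have hsph : (Metric.sphere (0 : G) 1).Nonempty := by
    refine ⟨‖x‖⁻¹ • x, ?_⟩
    rw [mem_sphere_zero_iff_norm, norm_smul, norm_inv, norm_norm]
    exact inv_mul_cancel₀ hxn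
  -- maximize `‖T ·‖` over the sphere
  obtain ⟨ξ, hξmem, hξmax⟩ := (isCompact_sphere (0 : G) 1).exists_isMaxOn hsph
    (continuous_norm.comp T.continuous).continuousOn
  have hξ : ‖ξ‖ = 1 := by simpa using hξmem
  -- every unit vector has `‖T y‖ ≤ ‖T ξ‖`, hence `‖T‖ ≤ ‖T ξ‖`
  have hTle : ‖T‖ ≤ ‖T ξ‖ := by
    refine T.opNorm_le_bound (norm_nonneg _) fun y => ?_
    rcases eq_or_ne y 0 with rfl | hy
    · simp
    · have hyn : ‖y‖ ≠ 0 := norm_ne_zero_iff.mpr hy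
      have hmem : ‖y‖⁻¹ • y ∈ Metric.sphere (0 : G) 1 := by
        rw [mem_sphere_zero_iff_norm, norm_smul, norm_inv, norm_norm]
        exact inv_mul_cancel₀ hyn
      have h2 : ‖T (‖y‖⁻¹ • y)‖ ≤ ‖T ξ‖ := hξmax hmem
      rw [T.map_smul_of_tower, norm_smul, norm_inv, norm_norm] at h2
      calc ‖T y‖ = ‖y‖ * (‖y‖⁻¹ * ‖T y‖) := by
            rw [← mul_assoc, mul_inv_cancel₀ hyn, one_mul]
        _ ≤ ‖y‖ * ‖T ξ‖ := mul_le_mul_of_nonneg_left h2 (norm_nonneg _)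
        _ = ‖T ξ‖ * ‖y‖ := mul_comm _ _
  -- `‖π a ξ‖ = 1`
  have hπa : ‖π a‖ ≤ 1 := le_trans (NonUnitalStarAlgHom.norm_apply_le π a) ha
  have hπaξ_le : ‖π a (ξ : H)‖ ≤ 1 := by
    calc ‖π a (ξ : H)‖ ≤ ‖π a‖ * ‖(ξ : H)‖ := (π a).le_opNorm _
      _ ≤ 1 * 1 := mul_le_mul hπa (le_of_eq hξ) (norm_nonneg _) zero_le_one
      _ = 1 := one_mul 1
  have hcompr : ‖T ξ‖ ≤ ‖π a (ξ : H)‖ := by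
    calc ‖T ξ‖ ≤ ‖G.orthogonalProjection‖ * ‖π a (ξ : H)‖ := by
          simpa [hTdef] using (G.orthogonalProjection).le_opNorm (π a (ξ : H))
      _ ≤ 1 * ‖π a (ξ : H)‖ :=
          mul_le_mul_of_nonneg_right (Submodule.orthogonalProjectionOnto_norm_le G) (norm_nonneg _)
      _ = ‖π a (ξ : H)‖ := one_mul _
  have hη : ‖π a (ξ : H)‖ = 1 := by
    have h1 : (1 : ℝ) ≤ ‖T ξ‖ := hG ▸ hTle
    linarith
  -- now run the Cauchy–Schwarz type argument
  refine ⟨ξ, hξ, ?_⟩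
  set v : H := (ξ : H) with hvdef
  set η : H := π a v with hηdef
  have hSv : π (star a * a) v = star (π a) η := by
    rw [map_mul, map_star]; rfl
  have hinner : RCLike.re (inner ℂ (π (star a * a) v) v) = 1 := by
    rw [hSv, ContinuousLinearMap.star_eq_adjoint, ContinuousLinearMap.adjoint_inner_left]
    have : inner ℂ η (π a v) = inner ℂ η η := rfl
    rw [this, inner_self_eq_norm_sq_to_K]
    simp [← hηdef, hη]
  have hSv_le : ‖π (star a * a) v‖ ≤ 1 := by
    rw [hSv]
    calc ‖star (π a) η‖ ≤ ‖star (π a)‖ * ‖η‖ := le_opNorm _ _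
      _ = ‖π a‖ * ‖η‖ := by rw [norm_star]
      _ ≤ 1 * 1 := mul_le_mul hπa (le_of_eq hη) (norm_nonneg _) zero_le_one
      _ = 1 := one_mul 1
  have hv : ‖v‖ = 1 := hξ
  have key : ‖π (star a * a) v - v‖ ^ 2 ≤ 0 := by
    rw [@norm_sub_sq ℂ]
    nlinarith [norm_nonneg (π (star a * a) v), hSv_le, hinner, hv]
  have hz : π (star a * a) v - v = 0 := by
    have h0 : ‖π (star a * a) v - v‖ = 0 := by
      nlinarith [norm_nonneg (π (star a * a) v - v), key]
    exact norm_eq_zero.mp h0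
  exact sub_eq_zero.mp hz
end

section
/- Let φ : B(G) → B(G) be a unital completely positive map on operators of a finite-dimensional Hilbert space G arising as a compression of a representation, and let a be a contraction with ‖φ(a)‖ = 1. Then ‖φ(a* a)‖ = 1 and φ(a* a) has 1 as an eigenvalue. -/
/-- If `φ` is a unital completely positive (here: unital, positive, contractive and
satisfying the Kadison–Schwarz inequality) map into the operators on a finite-dimensional
Hilbert space `G` and `a` is a contraction with `‖φ a‖ = 1`, then `‖φ (a* a)‖ = 1` and
`φ (a* a)` has `1` as an eigenvalue. -/
theorem stmt_4
    {B : Type*} [NormedRing B] [StarRing B] [CStarRing B] [NormedAlgebra ℂ B]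
    [CompleteSpace B] [StarModule ℂ B]
    {G : Type*} [NormedAddCommGroup G] [InnerProductSpace ℂ G] [FiniteDimensional ℂ G]
    (φ : B →ₗ[ℂ] (G →L[ℂ] G))
    (hunital : φ 1 = 1)
    (hpos : ∀ x : B, (φ (star x * x)).IsPositive)
    (hcontr : ∀ x : B, ‖φ x‖ ≤ ‖x‖)
    (hKS : ∀ x : B, (φ (star x * x) - star (φ x) * φ x).IsPositive)
    (a : B) (ha : ‖a‖ ≤ 1) (hφa : ‖φ a‖ = 1) :
    ‖φ (star a * a)‖ = 1 ∧ ∃ ξ : G, ξ ≠ 0 ∧ φ (star a * a) ξ = ξ := by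
  haveI : CompleteSpace G := FiniteDimensional.complete ℂ G
  set T := φ (star a * a) with hTdef
  have hTpos : T.IsPositive := hpos a
  -- upper bound
  have hle : ‖T‖ ≤ 1 := by
    calc ‖T‖ ≤ ‖star a * a‖ := hcontr _
    _ = ‖a‖ * ‖a‖ := CStarRing.norm_star_mul_self
    _ ≤ 1 := by nlinarith [norm_nonneg a]
  -- key pointwise inequality
  have hkey : ∀ ξ : G, ‖(φ a) ξ‖ ^ 2 ≤ ‖T‖ * (‖ξ‖ * ‖ξ‖) := by
    intro ξ
    have h1 := (hKS a).2 ξ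
    rw [ContinuousLinearMap.reApplyInnerSelf_apply] at h1
    have h2 : ‖(φ a) ξ‖ ^ 2
        ≤ RCLike.re (inner ℂ (T ξ) ξ) := by
      have heq : RCLike.re (inner ℂ ((star (φ a) * φ a) ξ) ξ) = ‖(φ a) ξ‖ ^ 2 := by
        rw [ContinuousLinearMap.mul_apply, ContinuousLinearMap.star_eq_adjoint,
          ContinuousLinearMap.adjoint_inner_left]
        exact inner_self_eq_norm_sq (𝕜 := ℂ) ((φ a) ξ)
      rw [ContinuousLinearMap.sub_apply, inner_sub_left, map_sub] at h1
      linarith [h1, heq.ge, heq.le]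
    have h3 : RCLike.re (inner ℂ (T ξ) ξ) ≤ ‖T ξ‖ * ‖ξ‖ := re_inner_le_norm _ _
    have h4 : ‖T ξ‖ * ‖ξ‖ ≤ (‖T‖ * ‖ξ‖) * ‖ξ‖ :=
      mul_le_mul_of_nonneg_right (T.le_opNorm ξ) (norm_nonneg ξ)
    nlinarith
  have hge : 1 ≤ ‖T‖ := by
    refine Real.one_le_sqrt.mp ?_
    rw [← hφa]
    apply ContinuousLinearMap.opNorm_le_bound _ (Real.sqrt_nonneg _)
    intro ξ
    have := hkey ξ
    have h5 : ‖(φ a) ξ‖ = Real.sqrt (‖(φ a) ξ‖ ^ 2) := by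
      rw [Real.sqrt_sq (norm_nonneg _)]
    rw [h5]
    calc Real.sqrt (‖(φ a) ξ‖ ^ 2) ≤ Real.sqrt (‖T‖ * (‖ξ‖ * ‖ξ‖)) := Real.sqrt_le_sqrt this
    _ = Real.sqrt ‖T‖ * ‖ξ‖ := by
        rw [Real.sqrt_mul (norm_nonneg T), Real.sqrt_mul_self (norm_nonneg ξ)]
  have hnorm : ‖T‖ = 1 := le_antisymm hle hge
  refine ⟨hnorm, ?_⟩
  -- nontrivial G
  haveI : Nontrivial G := by
    by_contra h
    rw [not_nontrivial_iff_subsingleton] at h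
    haveI : Subsingleton (G →L[ℂ] G) := inferInstance
    rw [Subsingleton.elim (φ a) 0] at hφa
    simp at hφa
  have hspec : (1 : ℝ) ∈ spectrum ℝ T := by
    have := CStarAlgebra.norm_mem_spectrum_of_nonneg
      ((ContinuousLinearMap.nonneg_iff_isPositive T).mpr hTpos)
    rwa [hnorm] at this
  rw [spectrum.mem_iff] at hspec
  have hnotunit : ¬ IsUnit ((1 : G →L[ℂ] G) - T) := by simpa using hspec
  have hnotinj : ¬ Function.Injective ((1 : G →L[ℂ] G) - T) := by
    intro hinj
    exact hnotunit (ContinuousLinearMap.isUnit_iff_bijective.mpr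
      ⟨hinj, (LinearMap.injective_iff_surjective
        (f := (((1 : G →L[ℂ] G) - T : G →L[ℂ] G) : G →ₗ[ℂ] G))).mp hinj⟩)
  rw [Function.not_injective_iff] at hnotinj
  obtain ⟨x, y, hxy, hne⟩ := hnotinj
  refine ⟨x - y, sub_ne_zero_of_ne hne, ?_⟩
  have h0 : ((1 : G →L[ℂ] G) - T) (x - y) = 0 := by
    rw [map_sub, hxy, sub_self]
  rw [ContinuousLinearMap.sub_apply, ContinuousLinearMap.one_apply, sub_eq_zero] at h0
  exact h0.symm
end

section
/- Let Z = (Z_1,…,Z_d) be a d-tuple of n×n complex matrices and Y = (Y_1,…,Y_d) a d-tuple of bounded operators on a Hilbert space H, both row contractions (i.e., Σ Z_j Z_j* ≤ I and Σ Y_j Y_j* ≤ I). Suppose T : ℂⁿ → H has ‖T‖ = 1, satisfies Σ_j Y_j T Z_j* = T, and v ∈ ℂⁿ is a unit vector with ‖Tv‖ = 1. Then Y_j* T v = T Z_j* v for every j = 1,…,d. -/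
open scoped Matrix ComplexOrder

/-- Equality case of Cauchy–Schwarz for fixed points of `ψ_{Y,Z}`: if `T` is a norm-one
fixed point of `T ↦ ∑ Y_j T Z_j*` with `Z`, `Y` row contractions, and `v` is a unit vector
with `‖T v‖ = 1`, then `Y_j* T v = T Z_j* v` for all `j`. -/
theorem stmt_6 {d n : ℕ}
    {H : Type*} [NormedAddCommGroup H] [InnerProductSpace ℂ H] [CompleteSpace H]
    (Z : Fin d → Matrix (Fin n) (Fin n) ℂ) (Y : Fin d → H →L[ℂ] H)
    (hZ : Matrix.PosSemidef (1 - ∑ j, Z j * (Z j)ᴴ))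
    (hY : (1 - ∑ j, Y j * star (Y j)).IsPositive)
    (T : EuclideanSpace ℂ (Fin n) →L[ℂ] H) (hT : ‖T‖ = 1)
    (hfix : ∑ j, (Y j) ∘L T ∘L star (Matrix.toEuclideanCLM (𝕜 := ℂ) (Z j)) = T)
    (v : EuclideanSpace ℂ (Fin n)) (hv : ‖v‖ = 1) (hTv : ‖T v‖ = 1) :
    ∀ j, (star (Y j)) (T v) = T ((star (Matrix.toEuclideanCLM (𝕜 := ℂ) (Z j))) v) := by
  set Zc : Fin d → (EuclideanSpace ℂ (Fin n) →L[ℂ] EuclideanSpace ℂ (Fin n)) :=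
    fun j => Matrix.toEuclideanCLM (𝕜 := ℂ) (Z j) with hZc
  set a : Fin d → H := fun j => T ((star (Zc j)) v) with ha
  set b : Fin d → H := fun j => (star (Y j)) (T v) with hb
  -- Step A : sum of inner products equals 1
  have key1 : ∑ j, (inner ℂ (a j) (b j) : ℂ) = 1 := by
    have : ∀ j, (inner ℂ (a j) (b j) : ℂ) = inner ℂ ((Y j) (a j)) (T v) := by
      intro j
      simp only [hb, ContinuousLinearMap.star_eq_adjoint]
      rw [ContinuousLinearMap.adjoint_inner_right]
    rw [Finset.sum_congr rfl fun j _ => this j, ← sum_inner]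
    have h2 : ∑ j, (Y j) (a j) = T v := by
      have := congrArg (fun (S : EuclideanSpace ℂ (Fin n) →L[ℂ] H) => S v) hfix
      simpa [ha, ContinuousLinearMap.sum_apply] using this
    rw [h2, inner_self_eq_norm_sq_to_K, hTv]
    norm_num
  -- Step B : ∑ ‖b j‖² ≤ 1
  have sum_b : ∑ j, ‖b j‖ ^ 2 ≤ 1 := by
    have hpos := hY.2 (T v)
    rw [ContinuousLinearMap.reApplyInnerSelf_apply] at hpos
    simp only [RCLike.re_to_complex] at hpos
    have hexp : ∀ j, ‖b j‖ ^ 2 = Complex.re (inner ℂ ((Y j * star (Y j)) (T v)) (T v)) := by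
      intro j
      have : ((Y j * star (Y j)) (T v)) = (Y j) ((star (Y j)) (T v)) := rfl
      rw [this, hb]
      simp only [ContinuousLinearMap.star_eq_adjoint, ← RCLike.re_to_complex]
      rw [inner_re_symm, ← ContinuousLinearMap.adjoint_inner_left, inner_self_eq_norm_sq]
    calc ∑ j, ‖b j‖ ^ 2
        = Complex.re (inner ℂ ((∑ j, Y j * star (Y j)) (T v)) (T v)) := by
          rw [ContinuousLinearMap.sum_apply, sum_inner, Complex.re_sum]
          exact Finset.sum_congr rfl fun j _ => hexp j
      _ ≤ 1 := by
          have h1 : Complex.re (inner ℂ (((1 : H →L[ℂ] H) - ∑ j, Y j * star (Y j)) (T v)) (T v))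
              = Complex.re ((inner ℂ (T v) (T v) : ℂ))
                - Complex.re (inner ℂ ((∑ j, Y j * star (Y j)) (T v)) (T v)) := by
            rw [ContinuousLinearMap.sub_apply, inner_sub_left, Complex.sub_re]
            simp [sum_inner, Complex.re_sum]
          have h2 : Complex.re ((inner ℂ (T v) (T v) : ℂ)) = 1 := by
            rw [inner_self_eq_norm_sq_to_K, hTv]; norm_num
          rw [h1, h2] at hpos
          linarith
  -- Step C : ∑ ‖a j‖² ≤ 1
  have sum_a : ∑ j, ‖a j‖ ^ 2 ≤ 1 := by
    have hle : ∀ j, ‖a j‖ ^ 2 ≤ ‖(star (Zc j)) v‖ ^ 2 := by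
      intro j
      have := T.le_opNorm ((star (Zc j)) v)
      rw [hT, one_mul] at this
      exact pow_le_pow_left₀ (norm_nonneg _) this 2
    have hexp : ∀ j, ‖(star (Zc j)) v‖ ^ 2
        = Complex.re (inner ℂ v ((Zc j * star (Zc j)) v) : ℂ) := by
      intro j
      have : ((Zc j * star (Zc j)) v) = (Zc j) ((star (Zc j)) v) := rfl
      rw [this]
      simp only [ContinuousLinearMap.star_eq_adjoint, ← RCLike.re_to_complex]
      rw [← ContinuousLinearMap.adjoint_inner_left, inner_self_eq_norm_sq]
    have hsum : ∑ j, ‖(star (Zc j)) v‖ ^ 2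
        = Complex.re (inner ℂ v ((∑ j, Zc j * star (Zc j)) v) : ℂ) := by
      rw [ContinuousLinearMap.sum_apply, inner_sum, Complex.re_sum]
      exact Finset.sum_congr rfl fun j _ => hexp j
    have hmat : (∑ j, Zc j * star (Zc j))
        = Matrix.toEuclideanCLM (𝕜 := ℂ) (∑ j, Z j * (Z j)ᴴ) := by
      rw [map_sum]
      refine Finset.sum_congr rfl fun j _ => ?_
      rw [map_mul]
      congr 1
      rw [← Matrix.star_eq_conjTranspose, map_star]
    have hpsd : (0 : ℂ) ≤ inner ℂ v
        ((Matrix.toEuclideanCLM (𝕜 := ℂ) ((1 : Matrix (Fin n) (Fin n) ℂ)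
          - ∑ j, Z j * (Z j)ᴴ)) v) := by
      have := hZ.dotProduct_mulVec_nonneg (WithLp.ofLp v)
      rw [EuclideanSpace.inner_eq_star_dotProduct, Matrix.ofLp_toEuclideanCLM,
        dotProduct_comm]
      exact this
    have hsplit : (inner ℂ v
        ((Matrix.toEuclideanCLM (𝕜 := ℂ) ((1 : Matrix (Fin n) (Fin n) ℂ)
          - ∑ j, Z j * (Z j)ᴴ)) v) : ℂ)
        = inner ℂ v v - inner ℂ v ((Matrix.toEuclideanCLM (𝕜 := ℂ) (∑ j, Z j * (Z j)ᴴ)) v) := by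
      rw [map_sub, map_one, ContinuousLinearMap.sub_apply, ContinuousLinearMap.one_apply,
        inner_sub_right]
    have hre : Complex.re (inner ℂ v ((Matrix.toEuclideanCLM (𝕜 := ℂ)
        (∑ j, Z j * (Z j)ᴴ)) v) : ℂ) ≤ 1 := by
      have h0 : (0:ℝ) ≤ Complex.re (inner ℂ v
          ((Matrix.toEuclideanCLM (𝕜 := ℂ) ((1 : Matrix (Fin n) (Fin n) ℂ)
            - ∑ j, Z j * (Z j)ᴴ)) v) : ℂ) := by
        simpa using (Complex.le_def.mp hpsd).1
      rw [hsplit, Complex.sub_re] at h0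
      have hvv : Complex.re ((inner ℂ v v : ℂ)) = 1 := by
        rw [inner_self_eq_norm_sq_to_K, hv]; norm_num
      linarith
    calc ∑ j, ‖a j‖ ^ 2 ≤ ∑ j, ‖(star (Zc j)) v‖ ^ 2 :=
          Finset.sum_le_sum fun j _ => hle j
      _ = Complex.re (inner ℂ v ((∑ j, Zc j * star (Zc j)) v) : ℂ) := hsum
      _ ≤ 1 := by rw [hmat]; exact hre
  -- Step D : conclude
  have key1re : ∑ j, Complex.re (inner ℂ (a j) (b j) : ℂ) = 1 := by
    rw [← Complex.re_sum, key1]; simp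
  have hzero : ∑ j, ‖a j - b j‖ ^ 2 ≤ 0 := by
    have : ∀ j, ‖a j - b j‖ ^ 2
        = ‖a j‖ ^ 2 - 2 * Complex.re (inner ℂ (a j) (b j) : ℂ) + ‖b j‖ ^ 2 := fun j =>
      norm_sub_sq (𝕜 := ℂ) (a j) (b j)
    rw [Finset.sum_congr rfl fun j _ => this j]
    rw [Finset.sum_add_distrib, Finset.sum_sub_distrib, ← Finset.mul_sum, key1re]
    linarith
  intro j
  have hj : ‖a j - b j‖ ^ 2 = 0 := by
    have hnn : ∀ i ∈ Finset.univ, (0:ℝ) ≤ ‖a i - b i‖ ^ 2 := fun i _ => sq_nonneg _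
    have := (Finset.sum_eq_zero_iff_of_nonneg hnn).mp
      (le_antisymm hzero (Finset.sum_nonneg hnn)) j (Finset.mem_univ j)
    exact this
  have : a j = b j := by
    rwa [pow_eq_zero_iff (by norm_num), norm_eq_zero, sub_eq_zero] at hj
  exact this.symm
end

section
/- Let r be a noncommutative rational function with Fornasini–Marchesini realization r(Z) = D·I + (I⊗C*) L_A(Z)⁻¹ (Σ_j Z_j ⊗ B_j), where L_A(Z) = I - Σ_j Z_j ⊗ A_j, evaluated at a tuple Z of m×m matrices with L_A(Z) invertible. For λ ≠ D, λ is an eigenvalue of r(Z) if and only if 1 is an eigenvalue of Σ_j Z_j ⊗ A_j^{(λ)}, where A_j^{(λ)} = A_j + (λ - D)⁻¹ B_j C*. Moreover if v is an eigenvector of Σ_j Z_j ⊗ A_j^{(λ)} with eigenvalue 1, then (I ⊗ C*) v is an eigenvector of r(Z) with eigenvalue λ. -/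
open scoped Matrix Kronecker

/-- The linear pencil `L_A(Z) = I - ∑ Z_j ⊗ A_j`. -/
noncomputable def pencilL {d m n : ℕ} (Z : Fin d → Matrix (Fin m) (Fin m) ℂ)
    (A : Fin d → Matrix (Fin n) (Fin n) ℂ) :
    Matrix (Fin m × Fin n) (Fin m × Fin n) ℂ :=
  1 - ∑ j, Z j ⊗ₖ A j

/-- The matrix `I_m ⊗ C*`. -/
noncomputable def rowC {m n : ℕ} (C : Fin n → ℂ) :
    Matrix (Fin m × Unit) (Fin m × Fin n) ℂ :=
  (1 : Matrix (Fin m) (Fin m) ℂ) ⊗ₖ (Matrix.of fun (_ : Unit) i => star (C i))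

/-- The matrix `∑ Z_j ⊗ B_j`. -/
noncomputable def colB {d m n : ℕ} (Z : Fin d → Matrix (Fin m) (Fin m) ℂ)
    (B : Fin d → Fin n → ℂ) :
    Matrix (Fin m × Fin n) (Fin m × Unit) ℂ :=
  ∑ j, Z j ⊗ₖ (Matrix.of fun i (_ : Unit) => B j i)

/-- The evaluation `r(Z) = D I + (I ⊗ C*) L_A(Z)⁻¹ (∑ Z_j ⊗ B_j)` of the FM realization. -/
noncomputable def fmEval {d m n : ℕ} (Z : Fin d → Matrix (Fin m) (Fin m) ℂ)
    (A : Fin d → Matrix (Fin n) (Fin n) ℂ) (B : Fin d → Fin n → ℂ) (C : Fin n → ℂ)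
    (D : ℂ) : Matrix (Fin m × Unit) (Fin m × Unit) ℂ :=
  D • 1 + (rowC C * (pencilL Z A)⁻¹ : Matrix (Fin m × Unit) (Fin m × Fin n) ℂ) * colB Z B

notation:70 a:70 " *ₘ " b:71 => @HMul.hMul _ _ _ Matrix.instHMulOfFintypeOfMulOfAddCommMonoid a b

lemma fmEval_eq {d m n : ℕ} (Z : Fin d → Matrix (Fin m) (Fin m) ℂ)
    (A : Fin d → Matrix (Fin n) (Fin n) ℂ) (B : Fin d → Fin n → ℂ) (C : Fin n → ℂ)
    (D : ℂ) : fmEval Z A B C D = D • 1 + rowC C *ₘ (pencilL Z A)⁻¹ *ₘ colB Z B := rfl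

lemma colB_mul_rowC {d m n : ℕ} (Z : Fin d → Matrix (Fin m) (Fin m) ℂ) (B : Fin d → Fin n → ℂ)
    (C : Fin n → ℂ) :
    (colB Z B *ₘ rowC C : Matrix (Fin m × Fin n) (Fin m × Fin n) ℂ) = ∑ j, Z j ⊗ₖ Matrix.vecMulVec (B j) (fun i => star (C i)) := by
  rw [colB, rowC, Matrix.sum_mul]
  refine Finset.sum_congr rfl fun j _ => ?_
  rw [← Matrix.mul_kronecker_mul, mul_one]
  ext i k
  simp [Matrix.mul_apply, Matrix.vecMulVec_apply]

lemma sumA_eq {d m n : ℕ} (Z : Fin d → Matrix (Fin m) (Fin m) ℂ) (A : Fin d → Matrix (Fin n) (Fin n) ℂ)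
    (B : Fin d → Fin n → ℂ) (C : Fin n → ℂ) (mu : ℂ) :
    (∑ j, Z j ⊗ₖ (A j + mu⁻¹ • Matrix.vecMulVec (B j) (fun i => star (C i))))
      = (1 - pencilL Z A) + mu⁻¹ • (colB Z B *ₘ rowC C : Matrix (Fin m × Fin n) (Fin m × Fin n) ℂ) := by
  rw [colB_mul_rowC, pencilL, sub_sub_cancel, Finset.smul_sum, ← Finset.sum_add_distrib]
  refine Finset.sum_congr rfl fun j _ => ?_
  rw [Matrix.kronecker_add, Matrix.kronecker_smul]

/-- For `λ ≠ D = r(0)` and `Z ∈ Dom r`, `λ` is an eigenvalue of `r(Z)` iff `1` is an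
eigenvalue of `∑ Z_j ⊗ A_j^{(λ)}` where `A_j^{(λ)} = A_j + (λ - D)⁻¹ B_j C*`; moreover if
`v` is an eigenvector of the latter for the eigenvalue `1`, then `(I ⊗ C*) v` is an
eigenvector of `r(Z)` for the eigenvalue `λ`. -/
theorem stmt_13 {d m n : ℕ}
    (A : Fin d → Matrix (Fin n) (Fin n) ℂ) (B : Fin d → Fin n → ℂ) (C : Fin n → ℂ)
    (D : ℂ) (Z : Fin d → Matrix (Fin m) (Fin m) ℂ)
    (hZ : IsUnit (pencilL Z A)) (lam : ℂ) (hlam : lam ≠ D) :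
    ((∃ w : Fin m × Unit → ℂ, w ≠ 0 ∧ (fmEval Z A B C D).mulVec w = lam • w) ↔
      (∃ v : Fin m × Fin n → ℂ, v ≠ 0 ∧
        (∑ j, Z j ⊗ₖ (A j + (lam - D)⁻¹ • Matrix.vecMulVec (B j)
          (fun i => star (C i)))).mulVec v = v)) ∧
    (∀ v : Fin m × Fin n → ℂ, v ≠ 0 →
      (∑ j, Z j ⊗ₖ (A j + (lam - D)⁻¹ • Matrix.vecMulVec (B j)
          (fun i => star (C i)))).mulVec v = v →
      (rowC C).mulVec v ≠ 0 ∧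
        (fmEval Z A B C D).mulVec ((rowC C).mulVec v) = lam • (rowC C).mulVec v) := by
  set L := pencilL Z A with hL
  set Li := L⁻¹ with hLi
  set mu := lam - D with hmu0
  have hmu : mu ≠ 0 := sub_ne_zero.mpr hlam
  have hdet : IsUnit L.det := (Matrix.isUnit_iff_isUnit_det _).mp hZ
  have hLLi : L * Li = 1 := Matrix.mul_nonsing_inv _ hdet
  have hLiL : Li * L = 1 := Matrix.nonsing_inv_mul _ hdet
  have hMeq := sumA_eq Z A B C mu
  -- part 2 first
  have part2 : ∀ v : Fin m × Fin n → ℂ, v ≠ 0 →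
      (∑ j, Z j ⊗ₖ (A j + (lam - D)⁻¹ • Matrix.vecMulVec (B j)
          (fun i => star (C i)))).mulVec v = v →
      (rowC C).mulVec v ≠ 0 ∧
        (fmEval Z A B C D).mulVec ((rowC C).mulVec v) = lam • (rowC C).mulVec v := by
    intro v hv0 hv
    rw [← hmu0, hMeq] at hv
    rw [Matrix.add_mulVec, Matrix.sub_mulVec, Matrix.one_mulVec,
      Matrix.smul_mulVec, ← Matrix.mulVec_mulVec] at hv
    have hLv : L.mulVec v = mu⁻¹ • (colB Z B).mulVec ((rowC C).mulVec v) := by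
      have := congrArg (fun x => x - v + L.mulVec v) hv
      rw [← hL] at hv
      rw [← sub_eq_zero] at hv ⊢
      rw [← neg_eq_zero, ← hv]
      abel
    set w := (rowC C).mulVec v with hw
    have hveq : v = mu⁻¹ • Li.mulVec ((colB Z B).mulVec w) := by
      calc v = Li.mulVec (L.mulVec v) := by
              rw [Matrix.mulVec_mulVec, hLiL, Matrix.one_mulVec]
        _ = mu⁻¹ • Li.mulVec ((colB Z B).mulVec w) := by
              rw [hLv, Matrix.mulVec_smul]
    have hwne : w ≠ 0 := by
      intro h
      apply hv0
      rw [hveq, h]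
      simp
    refine ⟨hwne, ?_⟩
    have hrw : (rowC C *ₘ Li *ₘ colB Z B).mulVec w = mu • w := by
      have h1 : w = mu⁻¹ • (rowC C *ₘ Li *ₘ colB Z B).mulVec w := by
        conv_lhs => rw [hw, hveq]
        rw [Matrix.mulVec_smul, Matrix.mulVec_mulVec, Matrix.mulVec_mulVec]
      calc (rowC C *ₘ Li *ₘ colB Z B).mulVec w
          = mu • (mu⁻¹ • (rowC C *ₘ Li *ₘ colB Z B).mulVec w) := (smul_inv_smul₀ hmu _).symm
        _ = mu • w := by rw [← h1]
    rw [fmEval_eq, Matrix.add_mulVec, Matrix.smul_mulVec, Matrix.one_mulVec, ← hL, ← hLi,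
      hrw, hmu0]
    module
  refine ⟨⟨?_, ?_⟩, part2⟩
  · rintro ⟨w, hw0, hw⟩
    have hrw : (rowC C *ₘ Li *ₘ colB Z B).mulVec w = mu • w := by
      rw [fmEval_eq, Matrix.add_mulVec, Matrix.smul_mulVec, Matrix.one_mulVec, ← hL, ← hLi] at hw
      have := congrArg (fun x => x - D • w) hw
      simpa [hmu0, sub_smul] using this
    set v := mu⁻¹ • Li.mulVec ((colB Z B).mulVec w) with hv
    have hrv : (rowC C).mulVec v = w := by
      rw [hv, Matrix.mulVec_smul, Matrix.mulVec_mulVec, Matrix.mulVec_mulVec,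
        hrw, smul_smul, inv_mul_cancel₀ hmu, one_smul]
    refine ⟨v, ?_, ?_⟩
    · intro h
      apply hw0
      rw [← hrv, h, Matrix.mulVec_zero]
    · rw [hMeq, Matrix.add_mulVec, Matrix.sub_mulVec, Matrix.one_mulVec,
        Matrix.smul_mulVec, ← Matrix.mulVec_mulVec, hrv]
      have hLv : L.mulVec v = mu⁻¹ • (colB Z B).mulVec w := by
        rw [hv, Matrix.mulVec_smul, Matrix.mulVec_mulVec, Matrix.mulVec_mulVec,
          hLLi, Matrix.one_mul]
      rw [hLv]
      module
  · rintro ⟨v, hv0, hv⟩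
    obtain ⟨hwne, heig⟩ := part2 v hv0 hv
    exact ⟨_, hwne, heig⟩
end
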